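/- Let L > 0, T > 0, λ > 0, ε ∈ (0,1], let φ, g : [−L,L] × [0,T] → ℝ be continuous, and let η : [−L,L] × [0,T] → ℝ be sufficiently smooth (all derivatives appearing below continuous) and satisfy the damped perturbation equation η_tt − λ η_txx − η_xx + ε⁻¹(sin(φ + ε η) − sin φ) = g on (−L,L) × (0,T), with Neumann boundary conditions η_x(±L,t) = 0 and η_tx(±L,t) = 0 for all t, and initial data η(x,0) = u₀(x), η_t(x,0) = v₀(x). Then there exists a constant C depending only on T and λ such that for all t ∈ [0,T]: ∫_{−L}^{L} η_t(x,t)² dx + ∫_{−L}^{L} (η(x,t)² + η_x(x,t)²) dx + λ ∫_0^t ∫_{−L}^{L} η_tx(x,s)² dx ds ≤ C ( ∫_{−L}^{L} (u₀² + (u₀')²) dx + ∫_{−L}^{L} v₀² dx + ∫_0^T ∫_{−L}^{L} g² dx ds ). -/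

import Mathlib

open Set

/-- Partial derivative in time of a function of (x, t). -/
noncomputable def pdt (f : ℝ → ℝ → ℝ) (x t : ℝ) : ℝ := deriv (fun s => f x s) t

/-- Partial derivative in space of a function of (x, t). -/
noncomputable def pdx (f : ℝ → ℝ → ℝ) (x t : ℝ) : ℝ := deriv (fun y => f y t) x

open MeasureTheory Filter

section DampedHelpers

lemma hasDerivAt_snd' {F : ℝ × ℝ → ℝ} {x t : ℝ} (hF : DifferentiableAt ℝ F (x, t)) :
    HasDerivAt (fun s => F (x, s)) (fderiv ℝ F (x, t) (0, 1)) t := by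
  have h : HasDerivAt (fun s : ℝ => ((x, s) : ℝ × ℝ)) ((0 : ℝ), (1 : ℝ)) t :=
    (hasDerivAt_const t x).prodMk (hasDerivAt_id t)
  exact hF.hasFDerivAt.comp_hasDerivAt t h

lemma hasDerivAt_fst' {F : ℝ × ℝ → ℝ} {x t : ℝ} (hF : DifferentiableAt ℝ F (x, t)) :
    HasDerivAt (fun y => F (y, t)) (fderiv ℝ F (x, t) (1, 0)) x := by
  have h : HasDerivAt (fun y : ℝ => ((y, t) : ℝ × ℝ)) ((1 : ℝ), (0 : ℝ)) x :=
    (hasDerivAt_id x).prodMk (hasDerivAt_const x t)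
  exact hF.hasFDerivAt.comp_hasDerivAt x h

lemma fderiv_fderiv_apply' {F : ℝ × ℝ → ℝ} (hF : Differentiable ℝ (fderiv ℝ F))
    (p v w : ℝ × ℝ) :
    fderiv ℝ (fun q => fderiv ℝ F q v) p w = fderiv ℝ (fderiv ℝ F) p w v := by
  rw [fderiv_clm_apply (hF p) (differentiableAt_const v)]
  simp

lemma intervalIntegral_congr_Ioo {a b : ℝ} (hab : a ≤ b) {f g : ℝ → ℝ}
    (h : ∀ x ∈ Ioo a b, f x = g x) :
    ∫ x in a..b, f x = ∫ x in a..b, g x := by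
  apply intervalIntegral.integral_congr_ae
  have hb : ∀ᵐ x : ℝ, x ≠ b := by
    rw [MeasureTheory.ae_iff]
    simpa using measure_singleton b
  filter_upwards [hb] with x hx hmem
  rw [Set.uIoc_of_le hab] at hmem
  exact h x ⟨hmem.1, lt_of_le_of_ne hmem.2 hx⟩

lemma two_mul_integral_mul_le {a b : ℝ} (hab : a ≤ b) {f g : ℝ → ℝ}
    (hf : Continuous f) (hg : Continuous g) :
    2 * ∫ x in a..b, f x * g x ≤ (∫ x in a..b, f x ^ 2) + ∫ x in a..b, g x ^ 2 := by
  have h0 : 0 ≤ ∫ x in a..b, (f x ^ 2 + g x ^ 2 - 2 * (f x * g x)) :=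
    intervalIntegral.integral_nonneg hab fun x _ => by nlinarith [sq_nonneg (f x - g x)]
  have h1 : (∫ x in a..b, (f x ^ 2 + g x ^ 2 - 2 * (f x * g x)))
      = (∫ x in a..b, f x ^ 2) + (∫ x in a..b, g x ^ 2) - 2 * ∫ x in a..b, f x * g x := by
    rw [intervalIntegral.integral_sub (((hf.fun_pow 2).fun_add (hg.fun_pow 2)).intervalIntegrable _ _)
        ((continuous_const.fun_mul (hf.fun_mul hg)).intervalIntegrable _ _),
      intervalIntegral.integral_add ((hf.fun_pow 2).intervalIntegrable _ _)
        ((hg.fun_pow 2).intervalIntegrable _ _),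
      intervalIntegral.integral_const_mul]
  linarith [h1 ▸ h0]

lemma hasDerivAt_param_integral (a b : ℝ) (f f' : ℝ → ℝ → ℝ)
    (hf : Continuous (Function.uncurry f)) (hf' : Continuous (Function.uncurry f'))
    (hd : ∀ x t, HasDerivAt (fun s => f x s) (f' x t) t) (t₀ : ℝ) :
    HasDerivAt (fun t => ∫ x in a..b, f x t) (∫ x in a..b, f' x t₀) t₀ := by
  obtain ⟨M, hM⟩ : ∃ M, ∀ p ∈ (uIcc a b ×ˢ Icc (t₀ - 1) (t₀ + 1) : Set (ℝ × ℝ)),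
      ‖Function.uncurry f' p‖ ≤ M :=
    (isCompact_uIcc.prod isCompact_Icc).exists_bound_of_continuousOn hf'.continuousOn
  have key := intervalIntegral.hasDerivAt_integral_of_dominated_loc_of_deriv_le
    (𝕜 := ℝ) (μ := volume) (F := fun t x => f x t) (F' := fun t x => f' x t) (x₀ := t₀)
    (a := a) (b := b) (bound := fun _ => M) (s := Metric.ball t₀ 1) (Metric.ball_mem_nhds t₀ one_pos)
    (Eventually.of_forall fun t =>
      ((hf.comp (continuous_id.prodMk continuous_const)).aestronglyMeasurable))
    ((hf.comp (continuous_id.prodMk continuous_const)).intervalIntegrable _ _)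
    ((hf'.comp (continuous_id.prodMk continuous_const)).aestronglyMeasurable)
    (Eventually.of_forall fun x hx t htb => by
      apply hM (x, t)
      refine ⟨uIoc_subset_uIcc hx, ?_⟩
      rw [Real.ball_eq_Ioo] at htb
      exact Ioo_subset_Icc_self htb)
    (intervalIntegrable_const)
    (Eventually.of_forall fun x _ t _ => hd x t)
  exact key.2

lemma integral_add4 {a b c1 c2 c3 c4 : ℝ} {f1 f2 f3 f4 : ℝ → ℝ}
    (h1 : Continuous f1) (h2 : Continuous f2) (h3 : Continuous f3) (h4 : Continuous f4) :
    (∫ x in a..b, (c1 * f1 x + c2 * f2 x + c3 * f3 x + c4 * f4 x))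
      = c1 * (∫ x in a..b, f1 x) + c2 * (∫ x in a..b, f2 x)
        + c3 * (∫ x in a..b, f3 x) + c4 * (∫ x in a..b, f4 x) := by
  rw [intervalIntegral.integral_add
      (((((continuous_const.fun_mul h1).fun_add (continuous_const.fun_mul h2)).fun_add
        (continuous_const.fun_mul h3))).intervalIntegrable _ _)
      ((continuous_const.fun_mul h4).intervalIntegrable _ _),
    intervalIntegral.integral_add
      ((((continuous_const.fun_mul h1).fun_add (continuous_const.fun_mul h2))).intervalIntegrable _ _)
      ((continuous_const.fun_mul h3).intervalIntegrable _ _),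
    intervalIntegral.integral_add
      ((continuous_const.fun_mul h1).intervalIntegrable _ _)
      ((continuous_const.fun_mul h2).intervalIntegrable _ _),
    intervalIntegral.integral_const_mul, intervalIntegral.integral_const_mul,
    intervalIntegral.integral_const_mul, intervalIntegral.integral_const_mul]

lemma abs_sin_sub_sin_le' (a b : ℝ) : |Real.sin a - Real.sin b| ≤ |a - b| := by
  rw [Real.sin_sub_sin, abs_mul, abs_mul]
  have h1 : |Real.sin ((a - b) / 2)| ≤ |(a - b) / 2| := Real.abs_sin_le_abs
  have h2 : |Real.cos ((a + b) / 2)| ≤ 1 := Real.abs_cos_le_one _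
  have h3 : |(a - b) / 2| = |a - b| / 2 := by rw [abs_div]; norm_num
  have h4 : |(2 : ℝ)| = 2 := by norm_num
  have h5 : (0 : ℝ) ≤ |Real.sin ((a - b) / 2)| := abs_nonneg _
  have h6 : (0 : ℝ) ≤ |Real.cos ((a + b) / 2)| := abs_nonneg _
  rw [h4]
  nlinarith [abs_nonneg (a - b)]

end DampedHelpers


/-- Energy estimate for the damped perturbation equation
`η_tt − λ η_txx − η_xx + ε⁻¹(sin(φ + ε η) − sin φ) = g` with Neumann boundary
conditions: for `T > 0` and `λ > 0` there is a constant `C > 0` depending only on `T`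
and `λ` such that for all `t ∈ [0,T]`,
`∫ η_t² + ∫ (η² + η_x²) + λ ∫₀ᵗ ∫ η_tx² ≤ C (∫ (u₀² + u₀'²) + ∫ v₀² + ∫₀ᵀ ∫ g²)`. -/
theorem damped_energy_estimate (T lam : ℝ) (hT : 0 < T) (hlam : 0 < lam) :
    ∃ C > 0, ∀ (L ε : ℝ) (φ g η : ℝ → ℝ → ℝ) (u₀ v₀ : ℝ → ℝ),
      0 < L → 0 < ε → ε ≤ 1 →
      Continuous (Function.uncurry φ) → Continuous (Function.uncurry g) →
      ContDiff ℝ 3 (Function.uncurry η) →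
      (∀ x ∈ Ioo (-L) L, ∀ t ∈ Ioo (0 : ℝ) T,
        pdt (pdt η) x t - lam * pdx (pdx (pdt η)) x t - pdx (pdx η) x t
          + ε⁻¹ * (Real.sin (φ x t + ε * η x t) - Real.sin (φ x t)) = g x t) →
      (∀ t ∈ Icc (0 : ℝ) T,
        pdx η (-L) t = 0 ∧ pdx η L t = 0 ∧
        pdx (pdt η) (-L) t = 0 ∧ pdx (pdt η) L t = 0) →
      (∀ x ∈ Icc (-L) L, η x 0 = u₀ x ∧ pdt η x 0 = v₀ x) →
      ∀ t ∈ Icc (0 : ℝ) T,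
        (∫ x in (-L)..L, (pdt η x t) ^ 2)
            + (∫ x in (-L)..L, ((η x t) ^ 2 + (pdx η x t) ^ 2))
            + lam * ∫ s in (0 : ℝ)..t, ∫ x in (-L)..L, (pdx (pdt η) x s) ^ 2 ≤
          C * ((∫ x in (-L)..L, ((u₀ x) ^ 2 + (deriv u₀ x) ^ 2))
              + (∫ x in (-L)..L, (v₀ x) ^ 2)
              + ∫ s in (0 : ℝ)..T, ∫ x in (-L)..L, (g x s) ^ 2) := by
  refine ⟨Real.exp (3 * T), Real.exp_pos _, ?_⟩
  intro L ε φ g η u₀ v₀ hL hε hε1 hφc hgc hη hPDE hBC hIC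
  set F0 : ℝ × ℝ → ℝ := Function.uncurry η with hF0def
  have hF0c : ContDiff ℝ 3 F0 := hη
  set F1 : ℝ × ℝ → ℝ := fun p => fderiv ℝ F0 p (0, 1) with hF1def
  set F2 : ℝ × ℝ → ℝ := fun p => fderiv ℝ F0 p (1, 0) with hF2def
  have hF1c : ContDiff ℝ 2 F1 := (hF0c.fderiv_right (by norm_num)).clm_apply contDiff_const
  have hF2c : ContDiff ℝ 2 F2 := (hF0c.fderiv_right (by norm_num)).clm_apply contDiff_const
  set F11 : ℝ × ℝ → ℝ := fun p => fderiv ℝ F1 p (0, 1) with hF11def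
  set F21 : ℝ × ℝ → ℝ := fun p => fderiv ℝ F1 p (1, 0) with hF21def
  set F22 : ℝ × ℝ → ℝ := fun p => fderiv ℝ F2 p (1, 0) with hF22def
  have hF11c : ContDiff ℝ 1 F11 := (hF1c.fderiv_right (by norm_num)).clm_apply contDiff_const
  have hF21c : ContDiff ℝ 1 F21 := (hF1c.fderiv_right (by norm_num)).clm_apply contDiff_const
  have hF22c : ContDiff ℝ 1 F22 := (hF2c.fderiv_right (by norm_num)).clm_apply contDiff_const
  set F221 : ℝ × ℝ → ℝ := fun p => fderiv ℝ F21 p (1, 0) with hF221def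
  have hF221cont : Continuous F221 :=
    (((hF21c.fderiv_right (m := 0) (by norm_num)).clm_apply contDiff_const).continuous)
  have hF0d : Differentiable ℝ F0 := hF0c.differentiable (by norm_num)
  have hF1d : Differentiable ℝ F1 := hF1c.differentiable (by norm_num)
  have hF2d : Differentiable ℝ F2 := hF2c.differentiable (by norm_num)
  have hF21d : Differentiable ℝ F21 := hF21c.differentiable (by norm_num)
  -- bridging equalities between pdt/pdx and the F-functions
  have hpt : ∀ x t, pdt η x t = F1 (x, t) := fun x t =>
    (hasDerivAt_snd' (hF0d (x, t))).deriv
  have hpx : ∀ x t, pdx η x t = F2 (x, t) := fun x t =>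
    (hasDerivAt_fst' (hF0d (x, t))).deriv
  have hptt : ∀ x t, pdt (pdt η) x t = F11 (x, t) := by
    intro x t
    have h : (fun s => pdt η x s) = fun s => F1 (x, s) := funext fun s => hpt x s
    rw [pdt, h]
    exact (hasDerivAt_snd' (hF1d (x, t))).deriv
  have hpxt : ∀ x t, pdx (pdt η) x t = F21 (x, t) := by
    intro x t
    have h : (fun y => pdt η y t) = fun y => F1 (y, t) := funext fun y => hpt y t
    rw [pdx, h]
    exact (hasDerivAt_fst' (hF1d (x, t))).deriv
  have hpxx : ∀ x t, pdx (pdx η) x t = F22 (x, t) := by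
    intro x t
    have h : (fun y => pdx η y t) = fun y => F2 (y, t) := funext fun y => hpx y t
    rw [pdx, h]
    exact (hasDerivAt_fst' (hF2d (x, t))).deriv
  have hpxxt : ∀ x t, pdx (pdx (pdt η)) x t = F221 (x, t) := by
    intro x t
    have h : (fun y => pdx (pdt η) y t) = fun y => F21 (y, t) := funext fun y => hpxt y t
    rw [pdx, h]
    exact (hasDerivAt_fst' (hF21d (x, t))).deriv
  -- symmetry of second derivatives
  have hFFd : Differentiable ℝ (fderiv ℝ F0) :=
    (hF0c.fderiv_right (m := 2) (by norm_num)).differentiable (by norm_num)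
  have hsymm : ∀ p : ℝ × ℝ, fderiv ℝ F2 p (0, 1) = F21 p := by
    intro p
    have h1 : fderiv ℝ F2 p (0, 1) = fderiv ℝ (fderiv ℝ F0) p (0, 1) (1, 0) :=
      fderiv_fderiv_apply' hFFd p (1, 0) (0, 1)
    have h2 : F21 p = fderiv ℝ (fderiv ℝ F0) p (1, 0) (0, 1) :=
      fderiv_fderiv_apply' hFFd p (0, 1) (1, 0)
    have h3 := ((hF0c.contDiffAt (x := p)).isSymmSndFDerivAt (by norm_num))
      ((0 : ℝ), (1 : ℝ)) ((1 : ℝ), (0 : ℝ))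
    rw [h1, h2, h3]
  have hab : (-L : ℝ) ≤ L := by linarith
  -- derivative family
  have hd0t : ∀ x t, HasDerivAt (fun s => F0 (x, s)) (F1 (x, t)) t :=
    fun x t => hasDerivAt_snd' (hF0d (x, t))
  have hd1t : ∀ x t, HasDerivAt (fun s => F1 (x, s)) (F11 (x, t)) t :=
    fun x t => hasDerivAt_snd' (hF1d (x, t))
  have hd2t : ∀ x t, HasDerivAt (fun s => F2 (x, s)) (F21 (x, t)) t := by
    intro x t
    have h := hasDerivAt_snd' (hF2d (x, t))
    rwa [hsymm (x, t)] at h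
  have hd1x : ∀ x t, HasDerivAt (fun y => F1 (y, t)) (F21 (x, t)) x :=
    fun x t => hasDerivAt_fst' (hF1d (x, t))
  have hd2x : ∀ x t, HasDerivAt (fun y => F2 (y, t)) (F22 (x, t)) x :=
    fun x t => hasDerivAt_fst' (hF2d (x, t))
  have hd21x : ∀ x t, HasDerivAt (fun y => F21 (y, t)) (F221 (x, t)) x :=
    fun x t => hasDerivAt_fst' (hF21d (x, t))
  have hF0cont : Continuous F0 := hF0c.continuous
  have hF1cont : Continuous F1 := hF1c.continuous
  have hF2cont : Continuous F2 := hF2c.continuous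
  have hF11cont : Continuous F11 := hF11c.continuous
  have hF21cont : Continuous F21 := hF21c.continuous
  have hF22cont : Continuous F22 := hF22c.continuous
  -- energy quantities
  set e1 : ℝ → ℝ := fun r => ∫ x in (-L)..L, F1 (x, r) ^ 2 with he1def
  set e2 : ℝ → ℝ := fun r => ∫ x in (-L)..L, (F0 (x, r) ^ 2 + F2 (x, r) ^ 2) with he2def
  set Dd : ℝ → ℝ := fun r => ∫ x in (-L)..L, F21 (x, r) ^ 2 with hDddef
  set Q : ℝ → ℝ := fun r => ∫ x in (-L)..L, (g x r) ^ 2 with hQdef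
  set B : ℝ := ∫ s in (0 : ℝ)..T, Q s with hBdef
  have hE1 : ∀ r, HasDerivAt e1 (∫ x in (-L)..L, 2 * F1 (x, r) * F11 (x, r)) r := by
    intro r
    exact hasDerivAt_param_integral (-L) L (fun x t => F1 (x, t) ^ 2)
      (fun x t => 2 * F1 (x, t) * F11 (x, t)) (hF1cont.fun_pow 2)
      ((continuous_const.fun_mul hF1cont).fun_mul hF11cont)
      (fun x t => by simpa using (hd1t x t).fun_pow 2) r
  have hE2 : ∀ r, HasDerivAt e2
      (∫ x in (-L)..L, (2 * F0 (x, r) * F1 (x, r) + 2 * F2 (x, r) * F21 (x, r))) r := by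
    intro r
    exact hasDerivAt_param_integral (-L) L (fun x t => F0 (x, t) ^ 2 + F2 (x, t) ^ 2)
      (fun x t => 2 * F0 (x, t) * F1 (x, t) + 2 * F2 (x, t) * F21 (x, t))
      ((hF0cont.fun_pow 2).fun_add (hF2cont.fun_pow 2))
      (((continuous_const.fun_mul hF0cont).fun_mul hF1cont).fun_add
        ((continuous_const.fun_mul hF2cont).fun_mul hF21cont))
      (fun x t => by simpa using ((hd0t x t).fun_pow 2).fun_add ((hd2t x t).fun_pow 2)) r
  have hDdcont : Continuous Dd :=
    intervalIntegral.continuous_parametric_intervalIntegral_of_continuous'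
      (μ := volume) (f := fun r x => F21 (x, r) ^ 2)
      ((hF21cont.comp continuous_swap).fun_pow 2) (-L) L
  have hQcont : Continuous Q :=
    intervalIntegral.continuous_parametric_intervalIntegral_of_continuous'
      (μ := volume) (f := fun r x => g x r ^ 2)
      ((hgc.comp continuous_swap).fun_pow 2) (-L) L
  have hDint : ∀ r : ℝ, HasDerivAt (fun w => ∫ s in (0 : ℝ)..w, Dd s) (Dd r) r := fun r =>
    intervalIntegral.integral_hasDerivAt_right (hDdcont.intervalIntegrable _ _)
      (hDdcont.stronglyMeasurableAtFilter _ _) hDdcont.continuousAt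
  have hQint : ∀ r : ℝ, HasDerivAt (fun w => ∫ s in (0 : ℝ)..w, Q s) (Q r) r := fun r =>
    intervalIntegral.integral_hasDerivAt_right (hQcont.intervalIntegrable _ _)
      (hQcont.stronglyMeasurableAtFilter _ _) hQcont.continuousAt
  set Φ : ℝ → ℝ :=
    fun w => e1 w + e2 w + lam * (∫ s in (0 : ℝ)..w, Dd s) - ∫ s in (0 : ℝ)..w, Q s with hΦdef
  have hΦd : ∀ r, HasDerivAt Φ
      ((∫ x in (-L)..L, 2 * F1 (x, r) * F11 (x, r))
        + (∫ x in (-L)..L, (2 * F0 (x, r) * F1 (x, r) + 2 * F2 (x, r) * F21 (x, r)))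
        + lam * Dd r - Q r) r := fun r =>
    (((hE1 r).add (hE2 r)).add ((hDint r).const_mul lam)).sub (hQint r)
  have he1nn : ∀ r, 0 ≤ e1 r := fun r =>
    intervalIntegral.integral_nonneg hab fun x _ => sq_nonneg _
  have he2nn : ∀ r, 0 ≤ e2 r := fun r =>
    intervalIntegral.integral_nonneg hab fun x _ => by positivity
  have hDdnn : ∀ r, 0 ≤ Dd r := fun r =>
    intervalIntegral.integral_nonneg hab fun x _ => sq_nonneg _
  have hQnn : ∀ r, 0 ≤ Q r := fun r =>
    intervalIntegral.integral_nonneg hab fun x _ => sq_nonneg _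
  have hQInn : ∀ r, 0 ≤ r → 0 ≤ ∫ s in (0 : ℝ)..r, Q s := fun r hr =>
    intervalIntegral.integral_nonneg hr fun s _ => hQnn s
  have hDInn : ∀ r, 0 ≤ r → 0 ≤ ∫ s in (0 : ℝ)..r, Dd s := fun r hr =>
    intervalIntegral.integral_nonneg hr fun s _ => hDdnn s
  have hQIB : ∀ r, 0 ≤ r → r ≤ T → (∫ s in (0 : ℝ)..r, Q s) ≤ B := by
    intro r hr0 hrT
    have hadd := intervalIntegral.integral_add_adjacent_intervals
      (hQcont.intervalIntegrable (μ := volume) 0 r) (hQcont.intervalIntegrable (μ := volume) r T)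
    have h2 : 0 ≤ ∫ s in r..T, Q s := intervalIntegral.integral_nonneg hrT fun s _ => hQnn s
    rw [hBdef]
    linarith
  have hB0 : 0 ≤ B := hQInn T hT.le
  -- section continuity in x at fixed time r
  have sec0 : ∀ r, Continuous fun x => F0 (x, r) := fun r =>
    hF0cont.comp (continuous_id.prodMk continuous_const)
  have sec1 : ∀ r, Continuous fun x => F1 (x, r) := fun r =>
    hF1cont.comp (continuous_id.prodMk continuous_const)
  have sec2 : ∀ r, Continuous fun x => F2 (x, r) := fun r =>
    hF2cont.comp (continuous_id.prodMk continuous_const)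
  have sec21 : ∀ r, Continuous fun x => F21 (x, r) := fun r =>
    hF21cont.comp (continuous_id.prodMk continuous_const)
  have sec22 : ∀ r, Continuous fun x => F22 (x, r) := fun r =>
    hF22cont.comp (continuous_id.prodMk continuous_const)
  have sec221 : ∀ r, Continuous fun x => F221 (x, r) := fun r =>
    hF221cont.comp (continuous_id.prodMk continuous_const)
  have secg : ∀ r, Continuous fun x => g x r := fun r =>
    hgc.comp (continuous_id.prodMk continuous_const)
  -- the key differential inequality on (0, T)
  have hkey : ∀ r ∈ Ioo (0 : ℝ) T,
      (∫ x in (-L)..L, 2 * F1 (x, r) * F11 (x, r))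
        + (∫ x in (-L)..L, (2 * F0 (x, r) * F1 (x, r) + 2 * F2 (x, r) * F21 (x, r)))
        + lam * Dd r - Q r ≤ 3 * Φ r + 3 * B := by
    intro r hr
    set N : ℝ → ℝ := fun x => ε⁻¹ * (Real.sin (φ x r + ε * η x r) - Real.sin (φ x r))
      with hNdef
    have hNcont : Continuous N := by
      have h1 : Continuous fun x => φ x r := hφc.comp (continuous_id.prodMk continuous_const)
      have h2 : Continuous fun x => η x r := hF0cont.comp (continuous_id.prodMk continuous_const)
      exact continuous_const.mul
        ((Real.continuous_sin.comp (h1.add (continuous_const.mul h2))).sub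
          (Real.continuous_sin.comp h1))
    have hNsq : ∀ x, N x ^ 2 ≤ F0 (x, r) ^ 2 := by
      intro x
      have hlip := abs_sin_sub_sin_le' (φ x r + ε * η x r) (φ x r)
      have hdist : |φ x r + ε * η x r - φ x r| = ε * |η x r| := by
        rw [show φ x r + ε * η x r - φ x r = ε * η x r by ring, abs_mul, abs_of_pos hε]
      have habs : |N x| ≤ |η x r| := by
        rw [hNdef]
        simp only []
        rw [abs_mul, abs_inv, abs_of_pos hε]
        calc ε⁻¹ * |Real.sin (φ x r + ε * η x r) - Real.sin (φ x r)|
            ≤ ε⁻¹ * (ε * |η x r|) := by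
              apply mul_le_mul_of_nonneg_left _ (inv_nonneg.mpr hε.le)
              rw [← hdist]
              exact hlip
          _ = |η x r| := by field_simp
      have heq : |η x r| = |F0 (x, r)| := rfl
      rw [heq] at habs
      calc N x ^ 2 = |N x| ^ 2 := (sq_abs _).symm
        _ ≤ |F0 (x, r)| ^ 2 := pow_le_pow_left₀ (abs_nonneg _) habs 2
        _ = F0 (x, r) ^ 2 := sq_abs _
    obtain ⟨b1, b2, b3, b4⟩ := hBC r ⟨hr.1.le, hr.2.le⟩
    rw [hpx] at b1 b2
    rw [hpxt] at b3 b4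
    have hPDEr : ∀ x ∈ Ioo (-L) L,
        F11 (x, r) = lam * F221 (x, r) + F22 (x, r) - N x + g x r := by
      intro x hx
      have hp := hPDE x hx r hr
      rw [hptt, hpxxt, hpxx] at hp
      have hNx : N x = ε⁻¹ * (Real.sin (φ x r + ε * η x r) - Real.sin (φ x r)) := rfl
      rw [← hNx] at hp
      linarith
    have ibpA : (∫ x in (-L)..L, (F221 (x, r) * F1 (x, r) + F21 (x, r) * F21 (x, r)))
        = F21 (L, r) * F1 (L, r) - F21 (-L, r) * F1 (-L, r) :=
      intervalIntegral.integral_deriv_mul_eq_sub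
        (fun x _ => hd21x x r) (fun x _ => hd1x x r)
        ((sec221 r).intervalIntegrable _ _) ((sec21 r).intervalIntegrable _ _)
    have ibpB : (∫ x in (-L)..L, (F22 (x, r) * F1 (x, r) + F2 (x, r) * F21 (x, r)))
        = F2 (L, r) * F1 (L, r) - F2 (-L, r) * F1 (-L, r) :=
      intervalIntegral.integral_deriv_mul_eq_sub
        (fun x _ => hd2x x r) (fun x _ => hd1x x r)
        ((sec22 r).intervalIntegrable _ _) ((sec21 r).intervalIntegrable _ _)
    have splitA : (∫ x in (-L)..L, (F221 (x, r) * F1 (x, r) + F21 (x, r) * F21 (x, r)))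
        = (∫ x in (-L)..L, F221 (x, r) * F1 (x, r))
          + ∫ x in (-L)..L, F21 (x, r) * F21 (x, r) :=
      intervalIntegral.integral_add (((sec221 r).mul (sec1 r)).intervalIntegrable _ _)
        (((sec21 r).mul (sec21 r)).intervalIntegrable _ _)
    have splitB : (∫ x in (-L)..L, (F22 (x, r) * F1 (x, r) + F2 (x, r) * F21 (x, r)))
        = (∫ x in (-L)..L, F22 (x, r) * F1 (x, r))
          + ∫ x in (-L)..L, F2 (x, r) * F21 (x, r) :=
      intervalIntegral.integral_add (((sec22 r).mul (sec1 r)).intervalIntegrable _ _)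
        (((sec2 r).mul (sec21 r)).intervalIntegrable _ _)
    have hDr : (∫ x in (-L)..L, F21 (x, r) * F21 (x, r)) = Dd r := by
      have hd : Dd r = ∫ x in (-L)..L, F21 (x, r) ^ 2 := rfl
      rw [hd]
      exact intervalIntegral.integral_congr fun x _ => by ring
    have iA : (∫ x in (-L)..L, F221 (x, r) * F1 (x, r)) = -Dd r := by
      rw [splitA, hDr, b4, b3] at ibpA
      linarith
    have iB : (∫ x in (-L)..L, F22 (x, r) * F1 (x, r))
        = -∫ x in (-L)..L, F2 (x, r) * F21 (x, r) := by
      rw [splitB, b2, b1] at ibpB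
      linarith
    have hcongr : (∫ x in (-L)..L, 2 * F1 (x, r) * F11 (x, r))
        = ∫ x in (-L)..L, ((2 * lam) * (F221 (x, r) * F1 (x, r))
            + 2 * (F22 (x, r) * F1 (x, r))
            + (-2) * (F1 (x, r) * N x) + 2 * (F1 (x, r) * g x r)) :=
      intervalIntegral_congr_Ioo hab fun x hx => by rw [hPDEr x hx]; ring
    have hsplit4 := integral_add4 (a := -L) (b := L) (c1 := 2 * lam) (c2 := 2) (c3 := -2)
      (c4 := 2) ((sec221 r).fun_mul (sec1 r)) ((sec22 r).fun_mul (sec1 r)) ((sec1 r).fun_mul hNcont)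
      ((sec1 r).fun_mul (secg r))
    have hsplit2 : (∫ x in (-L)..L, (2 * F0 (x, r) * F1 (x, r) + 2 * F2 (x, r) * F21 (x, r)))
        = 2 * (∫ x in (-L)..L, F0 (x, r) * F1 (x, r))
          + 2 * ∫ x in (-L)..L, F2 (x, r) * F21 (x, r) := by
      have hc : (∫ x in (-L)..L, (2 * F0 (x, r) * F1 (x, r) + 2 * F2 (x, r) * F21 (x, r)))
          = ∫ x in (-L)..L, (2 * (F0 (x, r) * F1 (x, r)) + 2 * (F2 (x, r) * F21 (x, r))) :=
        intervalIntegral.integral_congr fun x _ => by ring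
      rw [hc, intervalIntegral.integral_add
          ((continuous_const.fun_mul ((sec0 r).fun_mul (sec1 r))).intervalIntegrable _ _)
          ((continuous_const.fun_mul ((sec2 r).fun_mul (sec21 r))).intervalIntegrable _ _),
        intervalIntegral.integral_const_mul, intervalIntegral.integral_const_mul]
    have hb1 : 2 * (∫ x in (-L)..L, F0 (x, r) * F1 (x, r))
        ≤ (∫ x in (-L)..L, F0 (x, r) ^ 2) + ∫ x in (-L)..L, F1 (x, r) ^ 2 :=
      two_mul_integral_mul_le hab (sec0 r) (sec1 r)
    have hb2 : 2 * (∫ x in (-L)..L, F1 (x, r) * g x r)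
        ≤ (∫ x in (-L)..L, F1 (x, r) ^ 2) + ∫ x in (-L)..L, (g x r) ^ 2 :=
      two_mul_integral_mul_le hab (sec1 r) (secg r)
    have hb3 : 2 * (∫ x in (-L)..L, F1 (x, r) * (-N x))
        ≤ (∫ x in (-L)..L, F1 (x, r) ^ 2) + ∫ x in (-L)..L, (-N x) ^ 2 :=
      two_mul_integral_mul_le hab (sec1 r) hNcont.neg
    have hneg1 : (∫ x in (-L)..L, F1 (x, r) * (-N x))
        = -(∫ x in (-L)..L, F1 (x, r) * N x) := by
      rw [← intervalIntegral.integral_neg]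
      exact intervalIntegral.integral_congr fun x _ => by ring
    have hneg2 : (∫ x in (-L)..L, (-N x) ^ 2) = ∫ x in (-L)..L, N x ^ 2 :=
      intervalIntegral.integral_congr fun x _ => by ring
    have hNle : (∫ x in (-L)..L, N x ^ 2) ≤ ∫ x in (-L)..L, F0 (x, r) ^ 2 :=
      intervalIntegral.integral_mono_on hab ((hNcont.pow 2).intervalIntegrable _ _)
        (((sec0 r).pow 2).intervalIntegrable _ _) fun x _ => hNsq x
    have hsplite2 : e2 r = (∫ x in (-L)..L, F0 (x, r) ^ 2) + ∫ x in (-L)..L, F2 (x, r) ^ 2 := by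
      have hd : e2 r = ∫ x in (-L)..L, (F0 (x, r) ^ 2 + F2 (x, r) ^ 2) := rfl
      rw [hd, intervalIntegral.integral_add (((sec0 r).fun_pow 2).intervalIntegrable _ _)
        (((sec2 r).fun_pow 2).intervalIntegrable _ _)]
    have hF2sqnn : 0 ≤ ∫ x in (-L)..L, F2 (x, r) ^ 2 :=
      intervalIntegral.integral_nonneg hab fun x _ => sq_nonneg _
    have he1r : e1 r = ∫ x in (-L)..L, F1 (x, r) ^ 2 := rfl
    have hQr : Q r = ∫ x in (-L)..L, (g x r) ^ 2 := rfl
    have hPhir : Φ r = e1 r + e2 r + lam * (∫ s in (0 : ℝ)..r, Dd s)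
        - ∫ s in (0 : ℝ)..r, Q s := rfl
    have hlamDd : 0 ≤ lam * Dd r := mul_nonneg hlam.le (hDdnn r)
    have hlamDI : 0 ≤ lam * ∫ s in (0 : ℝ)..r, Dd s := mul_nonneg hlam.le (hDInn r hr.1.le)
    have hQtr := hQIB r hr.1.le hr.2.le
    have he2nnr := he2nn r
    rw [hcongr, hsplit4, hsplit2, iA, iB]
    rw [hneg1, hneg2] at hb3
    linarith
  have hPhicont : Continuous Φ :=
    (Differentiable.continuous fun r => (hΦd r).differentiableAt)
  have hmono : AntitoneOn (fun w => (Φ w + B) * Real.exp (-3 * w)) (Icc (0 : ℝ) T) := by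
    apply antitoneOn_of_deriv_nonpos (convex_Icc 0 T)
    · exact ((hPhicont.add continuous_const).mul
        (Real.continuous_exp.comp (continuous_const.mul continuous_id))).continuousOn
    · intro w hw
      have hlin : HasDerivAt (fun u : ℝ => -3 * u) (-3) w := by
        simpa using (hasDerivAt_id w).const_mul (-3)
      exact (((hΦd w).add_const B).mul hlin.exp).differentiableAt.differentiableWithinAt
    · intro w hw
      rw [interior_Icc] at hw
      have hlin : HasDerivAt (fun u : ℝ => -3 * u) (-3) w := by
        simpa using (hasDerivAt_id w).const_mul (-3)
      have hder := ((hΦd w).add_const B).fun_mul hlin.exp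
      have hkb := hkey w hw
      set d := (∫ x in (-L)..L, 2 * F1 (x, w) * F11 (x, w))
        + (∫ x in (-L)..L, (2 * F0 (x, w) * F1 (x, w) + 2 * F2 (x, w) * F21 (x, w)))
        + lam * Dd w - Q w with hddef
      rw [hder.deriv]
      have hexp := (Real.exp_pos (-3 * w)).le
      have h2 : (d - (3 * Φ w + 3 * B)) * Real.exp (-3 * w) ≤ 0 :=
        mul_nonpos_of_nonpos_of_nonneg (by linarith) hexp
      nlinarith [h2]
  intro t ht
  have hgoal1 : (∫ x in (-L)..L, (pdt η x t) ^ 2) = e1 t := by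
    simp only [he1def]
    exact intervalIntegral.integral_congr fun x _ => by rw [hpt]
  have hgoal2 : (∫ x in (-L)..L, ((η x t) ^ 2 + (pdx η x t) ^ 2)) = e2 t := by
    simp only [he2def]
    exact intervalIntegral.integral_congr fun x _ => by rw [hpx]; rfl
  have hgoal3 : (∫ s in (0 : ℝ)..t, ∫ x in (-L)..L, (pdx (pdt η) x s) ^ 2)
      = ∫ s in (0 : ℝ)..t, Dd s := by
    apply intervalIntegral.integral_congr
    intro s _
    simp only [hDddef]
    exact intervalIntegral.integral_congr fun x _ => by rw [hpxt]
  have hgoalQ : (∫ s in (0 : ℝ)..T, ∫ x in (-L)..L, (g x s) ^ 2) = B := rfl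
  have hIC1 : e1 0 = ∫ x in (-L)..L, (v₀ x) ^ 2 := by
    simp only [he1def]
    apply intervalIntegral.integral_congr
    intro x hx
    rw [uIcc_of_le hab] at hx
    show F1 (x, 0) ^ 2 = v₀ x ^ 2
    rw [← hpt, (hIC x hx).2]
  have hIC2 : e2 0 = ∫ x in (-L)..L, ((u₀ x) ^ 2 + (deriv u₀ x) ^ 2) := by
    simp only [he2def]
    apply intervalIntegral_congr_Ioo hab
    intro x hx
    have hxIcc : x ∈ Icc (-L) L := Ioo_subset_Icc_self hx
    have h0 : F0 (x, 0) = u₀ x := (hIC x hxIcc).1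
    have h2 : deriv u₀ x = F2 (x, 0) := by
      have hev : u₀ =ᶠ[nhds x] fun y => η y 0 := by
        filter_upwards [Icc_mem_nhds hx.1 hx.2] with y hy
        exact ((hIC y hy).1).symm
      rw [hev.deriv_eq]
      exact hpx x 0
    rw [h0, ← h2]
  have h0Icc : (0 : ℝ) ∈ Icc (0 : ℝ) T := ⟨le_refl 0, hT.le⟩
  have hmt := hmono h0Icc ht ht.1
  simp only [mul_zero, Real.exp_zero, mul_one] at hmt
  have hPhi0 : Φ 0 = e1 0 + e2 0 := by
    simp only [hΦdef, intervalIntegral.integral_same, mul_zero, sub_zero, add_zero]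
  have hmt' : Φ t + B ≤ (Φ 0 + B) * Real.exp (3 * t) := by
    have hE : Real.exp (-3 * t) * Real.exp (3 * t) = 1 := by
      rw [← Real.exp_add]; norm_num
    have hm := mul_le_mul_of_nonneg_right hmt (Real.exp_pos (3 * t)).le
    rw [mul_assoc, hE, mul_one] at hm
    exact hm
  have hPhi0Bnn : 0 ≤ Φ 0 + B := by
    rw [hPhi0]; linarith [he1nn 0, he2nn 0]
  have hexpmono : Real.exp (3 * t) ≤ Real.exp (3 * T) :=
    Real.exp_le_exp.mpr (by nlinarith [ht.2])
  have hfinal : Φ t + B ≤ (e1 0 + e2 0 + B) * Real.exp (3 * T) := by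
    calc Φ t + B ≤ (Φ 0 + B) * Real.exp (3 * t) := hmt'
      _ ≤ (Φ 0 + B) * Real.exp (3 * T) := mul_le_mul_of_nonneg_left hexpmono hPhi0Bnn
      _ = (e1 0 + e2 0 + B) * Real.exp (3 * T) := by rw [hPhi0]
  rw [hgoal1, hgoal2, hgoal3, ← hIC1, ← hIC2]
  have hPhit : Φ t = e1 t + e2 t + lam * (∫ s in (0 : ℝ)..t, Dd s)
      - ∫ s in (0 : ℝ)..t, Q s := rfl
  have hQtB := hQIB t ht.1 ht.2
  have hring : (e1 0 + e2 0 + B) * Real.exp (3 * T)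
      = Real.exp (3 * T) * (e2 0 + e1 0 + B) := by ring
  linarith [hfinal, hQInn t ht.1]
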